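/- Adding one rank-one update increases the determinant: with V_{t+1} = V_t + f f^T for V_t positive definite and f ∈ ℝ^k, det(V_{t+1}) = det(V_t) · (1 + ‖f‖²_{V_t^{-1}}). Consequently, if ‖f_t‖ ≤ L for all t, then Σ_{t=1}^n min(1, ‖f_t‖²_{V_t^{-1}}) ≤ 2 log( det(V_{n+1}) / det(λ I) ) ≤ 2k log(1 + nL²/(kλ)). -/

import Mathlib

open Matrix Finset


lemma aux_det_lemma {k : ℕ} (W : Matrix (Fin k) (Fin k) ℝ) (f : Fin k → ℝ) (hW : W.PosDef) :
    (W + Matrix.vecMulVec f f).det = W.det * (1 + f ⬝ᵥ (W⁻¹ *ᵥ f)) := by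
  rw [Matrix.vecMulVec_eq Unit, Matrix.det_add_replicateCol_mul_replicateRow hW.det_pos.ne'.isUnit]
  congr 1
  rw [Matrix.det_unique]
  have hsym : ∀ i j, W⁻¹ i j = W⁻¹ j i := fun i j => by
    have := hW.inv.isHermitian.apply i j
    simpa using this.symm
  simp [Matrix.mul_apply, Matrix.replicateRow, Matrix.replicateCol, dotProduct, Matrix.mulVec,
    Finset.mul_sum, Finset.sum_mul, mul_comm, mul_left_comm]
  exact Finset.sum_congr rfl fun x _ => Finset.sum_congr rfl fun i _ => by rw [hsym i x]

lemma aux_vecMulVec_psd {k : ℕ} (f : Fin k → ℝ) : (Matrix.vecMulVec f f).PosSemidef := by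
  refine Matrix.PosSemidef.of_dotProduct_mulVec_nonneg ?_ ?_
  · ext i j
    simp [Matrix.vecMulVec, Matrix.IsHermitian, mul_comm]
  · intro x
    have : Matrix.vecMulVec f f *ᵥ x = (f ⬝ᵥ x) • f := by
      ext i
      simp [Matrix.vecMulVec, Matrix.mulVec, dotProduct, Finset.mul_sum, mul_comm,
        mul_left_comm]
    rw [this]
    simp only [star_trivial, dotProduct_smul, smul_eq_mul]
    have : x ⬝ᵥ f = f ⬝ᵥ x := dotProduct_comm x f
    rw [this]
    exact mul_self_nonneg _

lemma aux_trace_eq_sum_eigs {k : ℕ} {A : Matrix (Fin k) (Fin k) ℝ} (hA : A.IsHermitian) :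
    A.trace = ∑ i, hA.eigenvalues i := by
  nth_rewrite 1 [hA.spectral_theorem]
  rw [Unitary.conjStarAlgAut_apply]
  rw [Matrix.trace_mul_cycle]
  rw [Matrix.mem_unitaryGroup_iff'.mp (Matrix.IsHermitian.eigenvectorUnitary hA).2]
  simp [Matrix.trace_diagonal]

lemma aux_log_det_le {k : ℕ} (hk : 0 < k) {A : Matrix (Fin k) (Fin k) ℝ} (hA : A.PosDef) :
    Real.log A.det ≤ k * Real.log (A.trace / k) := by
  set e := hA.1.eigenvalues with he_def
  have he : ∀ i, 0 < e i := hA.eigenvalues_pos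
  have htr : A.trace = ∑ i, e i := aux_trace_eq_sum_eigs hA.1
  have hdet : A.det = ∏ i, e i := by
    have := hA.1.det_eq_prod_eigenvalues
    push_cast at this
    exact this
  set μ := A.trace / k with hμ_def
  have htrpos : 0 < A.trace := htr ▸ Finset.sum_pos (fun i _ => he i)
      (Finset.univ_nonempty_iff.2 ⟨⟨0, hk⟩⟩)
  have hμ : 0 < μ := div_pos htrpos (by exact_mod_cast hk)
  have hlog : Real.log A.det = ∑ i, Real.log (e i) := by
    rw [hdet, Real.log_prod (fun i _ => (he i).ne')]
  have hbound : ∀ i, Real.log (e i) ≤ e i / μ - 1 + Real.log μ := by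
    intro i
    have h1 : Real.log (e i / μ) ≤ e i / μ - 1 :=
      Real.log_le_sub_one_of_pos (div_pos (he i) hμ)
    have h2 : Real.log (e i / μ) = Real.log (e i) - Real.log μ :=
      Real.log_div (he i).ne' hμ.ne'
    linarith
  have hsum : ∑ i, Real.log (e i) ≤ (∑ i, e i) / μ - k + k * Real.log μ := by
    calc ∑ i, Real.log (e i) ≤ ∑ i, (e i / μ - 1 + Real.log μ) :=
          Finset.sum_le_sum (fun i _ => hbound i)
      _ = (∑ i, e i) / μ - k + k * Real.log μ := by
          rw [Finset.sum_add_distrib, Finset.sum_sub_distrib]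
          simp [Finset.sum_div, Finset.card_univ, mul_comm]
  have hμk : (∑ i, e i) / μ = k := by
    rw [← htr, hμ_def]
    field_simp
  rw [hlog]
  rw [hμk] at hsum
  linarith

lemma aux_min_le_two_log {x : ℝ} (hx : 0 ≤ x) : min 1 x ≤ 2 * Real.log (1 + x) := by
  have h1x : (0:ℝ) < 1 + x := by linarith
  rcases le_total x 1 with h | h
  · rw [min_eq_right h]
    have hinv : Real.log (1 + x)⁻¹ ≤ (1 + x)⁻¹ - 1 :=
      Real.log_le_sub_one_of_pos (by positivity)
    rw [Real.log_inv] at hinv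
    have hlb : x / (1 + x) ≤ Real.log (1 + x) := by
      have : 1 - (1 + x)⁻¹ = x / (1 + x) := by field_simp; ring
      linarith [this ▸ (by linarith : 1 - (1+x)⁻¹ ≤ Real.log (1+x))]
    have : x / 2 ≤ x / (1 + x) := by
      apply div_le_div_of_nonneg_left hx h1x
      linarith
    linarith
  · rw [min_eq_left h]
    have h2 : Real.log 2 ≤ Real.log (1 + x) :=
      Real.log_le_log (by norm_num) (by linarith)
    linarith [Real.log_two_gt_d9]

/-- Rank-one determinant update and the elliptical potential lemma:
`det(V + ffᵀ) = det V · (1 + ‖f‖²_{V⁻¹})`, and for the design matrices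
`V_0 = λI`, `V_{t+1} = V_t + f_t f_tᵀ` with `‖f_t‖ ≤ L`,
`∑_{t<n} min(1, ‖f_t‖²_{V_t⁻¹}) ≤ 2 log(det V_n / det(λI)) ≤ 2k log(1 + nL²/(kλ))`. -/
theorem stmt14 (k : ℕ) (hk : 0 < k) (n : ℕ) (l L : ℝ) (hl : 0 < l) (hL : 0 ≤ L)
    (F : ℕ → Fin k → ℝ) (hF : ∀ t, Real.sqrt (F t ⬝ᵥ F t) ≤ L)
    (V : ℕ → Matrix (Fin k) (Fin k) ℝ)
    (hV0 : V 0 = l • (1 : Matrix (Fin k) (Fin k) ℝ))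
    (hVs : ∀ t, V (t + 1) = V t + Matrix.vecMulVec (F t) (F t)) :
    (∀ (W : Matrix (Fin k) (Fin k) ℝ) (f : Fin k → ℝ), W.PosDef →
      (W + Matrix.vecMulVec f f).det = W.det * (1 + f ⬝ᵥ (W⁻¹ *ᵥ f))) ∧
    (∑ t ∈ range n, min 1 (F t ⬝ᵥ ((V t)⁻¹ *ᵥ F t)))
      ≤ 2 * Real.log ((V n).det / (l • (1 : Matrix (Fin k) (Fin k) ℝ)).det) ∧
    2 * Real.log ((V n).det / (l • (1 : Matrix (Fin k) (Fin k) ℝ)).det)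
      ≤ 2 * k * Real.log (1 + n * L ^ 2 / (k * l)) := by
  have hkR : (0:ℝ) < k := by exact_mod_cast hk
  -- positive definiteness of all V t
  have hsmul : (l • (1 : Matrix (Fin k) (Fin k) ℝ)).PosDef := by
    have : l • (1 : Matrix (Fin k) (Fin k) ℝ) = Matrix.diagonal (fun _ => l) := by
      ext i j
      rcases eq_or_ne i j with h | h <;> simp [h, Matrix.one_apply, Matrix.diagonal_apply]
    rw [this]
    exact (Matrix.posDef_diagonal_iff).2 fun _ => hl
  have hpos : ∀ t, (V t).PosDef := by
    intro t
    induction t with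
    | zero => rw [hV0]; exact hsmul
    | succ t ih =>
      rw [hVs t]
      exact ih.add_posSemidef (aux_vecMulVec_psd (F t))
  -- nonnegativity of the quadratic forms
  have hxnn : ∀ t, 0 ≤ F t ⬝ᵥ ((V t)⁻¹ *ᵥ F t) := by
    intro t
    have := ((hpos t).inv).posSemidef.dotProduct_mulVec_nonneg (F t)
    simpa using this
  -- determinant recursion
  have hdetrec : ∀ t, (V (t+1)).det = (V t).det * (1 + F t ⬝ᵥ ((V t)⁻¹ *ᵥ F t)) := by
    intro t
    rw [hVs t]
    exact aux_det_lemma (V t) (F t) (hpos t)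
  have hlogrec : ∀ t, Real.log (V (t+1)).det
      = Real.log (V t).det + Real.log (1 + F t ⬝ᵥ ((V t)⁻¹ *ᵥ F t)) := by
    intro t
    rw [hdetrec t, Real.log_mul (hpos t).det_pos.ne' (by linarith [hxnn t])]
  -- telescoping
  have htel : ∀ m, ∑ t ∈ range m, Real.log (1 + F t ⬝ᵥ ((V t)⁻¹ *ᵥ F t))
      = Real.log (V m).det - Real.log (V 0).det := by
    intro m
    induction m with
    | zero => simp
    | succ m ih => rw [Finset.sum_range_succ, ih, hlogrec m]; ring
  have hlogdiv : Real.log ((V n).det / (l • (1 : Matrix (Fin k) (Fin k) ℝ)).det)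
      = Real.log (V n).det - Real.log (V 0).det := by
    rw [Real.log_div (hpos n).det_pos.ne' hsmul.det_pos.ne', hV0]
  refine ⟨fun W f hW => aux_det_lemma W f hW, ?_, ?_⟩
  · -- middle inequality
    calc ∑ t ∈ range n, min 1 (F t ⬝ᵥ ((V t)⁻¹ *ᵥ F t))
        ≤ ∑ t ∈ range n, 2 * Real.log (1 + F t ⬝ᵥ ((V t)⁻¹ *ᵥ F t)) :=
          Finset.sum_le_sum fun t _ => aux_min_le_two_log (hxnn t)
      _ = 2 * (Real.log (V n).det - Real.log (V 0).det) := by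
          rw [← Finset.mul_sum, htel n]
      _ = 2 * Real.log ((V n).det / (l • (1 : Matrix (Fin k) (Fin k) ℝ)).det) := by
          rw [hlogdiv]
  · -- upper bound via trace
    have htrace : ∀ m, (V m).trace = k * l + ∑ t ∈ range m, (F t ⬝ᵥ F t) := by
      intro m
      induction m with
      | zero => rw [hV0]; simp [Matrix.trace_smul, Matrix.trace_one, mul_comm]
      | succ m ih =>
        rw [hVs m, Matrix.trace_add, ih, Finset.sum_range_succ]
        have : (Matrix.vecMulVec (F m) (F m)).trace = F m ⬝ᵥ F m := by
          simp [Matrix.trace, Matrix.vecMulVec, dotProduct, Matrix.diag]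
        rw [this]; ring
    have hFF : ∀ t, F t ⬝ᵥ F t ≤ L ^ 2 := by
      intro t
      have h0 : 0 ≤ F t ⬝ᵥ F t := by simpa using dotProduct_self_star_nonneg (R := ℝ) (F t)
      have := hF t
      nlinarith [Real.sq_sqrt h0, Real.sqrt_nonneg (F t ⬝ᵥ F t)]
    have htr_le : (V n).trace ≤ k * l + n * L ^ 2 := by
      rw [htrace n]
      have : ∑ t ∈ range n, (F t ⬝ᵥ F t) ≤ ∑ t ∈ range n, L ^ 2 :=
        Finset.sum_le_sum fun t _ => hFF t
      simp only [Finset.sum_const, Finset.card_range, nsmul_eq_mul] at this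
      linarith
    have hld : Real.log (V n).det ≤ k * Real.log ((V n).trace / k) :=
      aux_log_det_le hk (hpos n)
    have htrpos : 0 < (V n).trace := by
      rw [htrace n]
      have : 0 ≤ ∑ t ∈ range n, (F t ⬝ᵥ F t) :=
        Finset.sum_nonneg fun t _ => by simpa using dotProduct_self_star_nonneg (R := ℝ) (F t)
      nlinarith
    have hmono : Real.log ((V n).trace / k) ≤ Real.log (l * (1 + n * L ^ 2 / (k * l))) := by
      apply Real.log_le_log (div_pos htrpos hkR)
      rw [div_le_iff₀ hkR]
      have : l * (1 + n * L ^ 2 / (k * l)) * k = k * l + n * L ^ 2 := by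
        field_simp
      rw [this]; exact htr_le
    have hdet0 : (l • (1 : Matrix (Fin k) (Fin k) ℝ)).det = l ^ k := by
      simp [Matrix.det_smul]
    have hlogl : Real.log ((l • (1 : Matrix (Fin k) (Fin k) ℝ)).det) = k * Real.log l := by
      rw [hdet0, Real.log_pow]
    have hsplit : Real.log (l * (1 + n * L ^ 2 / (k * l)))
        = Real.log l + Real.log (1 + n * L ^ 2 / (k * l)) := by
      apply Real.log_mul hl.ne'
      have : 0 ≤ n * L ^ 2 / (k * l) := by positivity
      linarith
    rw [Real.log_div (hpos n).det_pos.ne' hsmul.det_pos.ne', hlogl]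
    have : Real.log (V n).det ≤ k * Real.log l + k * Real.log (1 + n * L ^ 2 / (k * l)) := by
      calc Real.log (V n).det ≤ k * Real.log ((V n).trace / k) := hld
        _ ≤ k * Real.log (l * (1 + n * L ^ 2 / (k * l))) := by
            exact mul_le_mul_of_nonneg_left hmono hkR.le
        _ = k * Real.log l + k * Real.log (1 + n * L ^ 2 / (k * l)) := by
            rw [hsplit]; ring
    linarith
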